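/- For the Lie algebra s₇^α = (e²⁵, −e¹⁵, α e⁴⁵, −α e³⁵, 0, 0) with α ≠ 0, the linear map determined dually by f¹ = e³, f² = −e⁴, f³ = e¹, f⁴ = −e², f⁵ = −α e⁵, f⁶ = e⁶ is a Lie algebra isomorphism from s₇^α onto s₇^{1/α}. -/

import Mathlib

/-- For `s₇^α = (e²⁵, −e¹⁵, αe⁴⁵, −αe³⁵, 0, 0)` with `α ≠ 0`, the linear
map determined dually by `f¹ = e³, f² = −e⁴, f³ = e¹, f⁴ = −e², f⁵ = −α e⁵, f⁶ = e⁶`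
is a Lie algebra isomorphism `s₇^α ≅ s₇^{1/α}`.
Here `g` carries the `s₇^α` brackets and `h` the `s₇^{1/α}` brackets; the dual basis
map sends `b₀ ↦ c₂, b₁ ↦ −c₃, b₂ ↦ c₀, b₃ ↦ −c₁, b₄ ↦ −α c₄, b₅ ↦ c₅`. -/
theorem stmt17 {g h : Type*}
    [LieRing g] [LieAlgebra ℝ g] [LieRing h] [LieAlgebra ℝ h]
    (α : ℝ) (hα : α ≠ 0)
    (b : Module.Basis (Fin 6) ℝ g) (c : Module.Basis (Fin 6) ℝ h)
    -- s₇^α on g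
    (hb1 : ⁅b 0, b 4⁆ = b 1) (hb2 : ⁅b 1, b 4⁆ = -b 0)
    (hb3 : ⁅b 2, b 4⁆ = α • b 3) (hb4 : ⁅b 3, b 4⁆ = -α • b 2)
    (hb5 : ⁅b 5, b 4⁆ = 0)
    (hb0 : ∀ i j : Fin 6, i ≠ 4 → j ≠ 4 → ⁅b i, b j⁆ = 0)
    -- s₇^{1/α} on h
    (hc1 : ⁅c 0, c 4⁆ = c 1) (hc2 : ⁅c 1, c 4⁆ = -c 0)
    (hc3 : ⁅c 2, c 4⁆ = α⁻¹ • c 3) (hc4 : ⁅c 3, c 4⁆ = -α⁻¹ • c 2)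
    (hc5 : ⁅c 5, c 4⁆ = 0)
    (hc0 : ∀ i j : Fin 6, i ≠ 4 → j ≠ 4 → ⁅c i, c j⁆ = 0) :
    (∀ x y : g, (b.constr ℝ ![c 2, -c 3, c 0, -c 1, -α • c 4, c 5]) ⁅x, y⁆ =
        ⁅(b.constr ℝ ![c 2, -c 3, c 0, -c 1, -α • c 4, c 5]) x,
          (b.constr ℝ ![c 2, -c 3, c 0, -c 1, -α • c 4, c 5]) y⁆) ∧
      Function.Bijective (b.constr ℝ ![c 2, -c 3, c 0, -c 1, -α • c 4, c 5]) := by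
  set φ := b.constr ℝ ![c 2, -c 3, c 0, -c 1, -α • c 4, c 5] with hφ
  set ψ := c.constr ℝ ![b 2, -b 3, b 0, -b 1, -α⁻¹ • b 4, b 5] with hψ
  have hb1' : ⁅b 4, b 0⁆ = -b 1 := by rw [← lie_skew, hb1]
  have hb2' : ⁅b 4, b 1⁆ = b 0 := by rw [← lie_skew, hb2, neg_neg]
  have hb3' : ⁅b 4, b 2⁆ = -α • b 3 := by rw [← lie_skew, hb3]; module
  have hb4' : ⁅b 4, b 3⁆ = α • b 2 := by rw [← lie_skew, hb4]; module
  have hb5' : ⁅b 4, b 5⁆ = 0 := by rw [← lie_skew, hb5, neg_zero]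
  have hc1' : ⁅c 4, c 0⁆ = -c 1 := by rw [← lie_skew, hc1]
  have hc2' : ⁅c 4, c 1⁆ = c 0 := by rw [← lie_skew, hc2, neg_neg]
  have hc3' : ⁅c 4, c 2⁆ = -α⁻¹ • c 3 := by rw [← lie_skew, hc3]; module
  have hc4' : ⁅c 4, c 3⁆ = α⁻¹ • c 2 := by rw [← lie_skew, hc4]; module
  have hc5' : ⁅c 4, c 5⁆ = 0 := by rw [← lie_skew, hc5, neg_zero]
  have e0 : φ (b 0) = c 2 := by rw [hφ, Module.Basis.constr_basis]; exact rfl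
  have e1 : φ (b 1) = -c 3 := by rw [hφ, Module.Basis.constr_basis]; exact rfl
  have e2 : φ (b 2) = c 0 := by rw [hφ, Module.Basis.constr_basis]; exact rfl
  have e3 : φ (b 3) = -c 1 := by rw [hφ, Module.Basis.constr_basis]; exact rfl
  have e4 : φ (b 4) = -α • c 4 := by rw [hφ, Module.Basis.constr_basis]; exact rfl
  have e5 : φ (b 5) = c 5 := by rw [hφ, Module.Basis.constr_basis]; exact rfl
  have f0 : ψ (c 0) = b 2 := by rw [hψ, Module.Basis.constr_basis]; exact rfl
  have f1 : ψ (c 1) = -b 3 := by rw [hψ, Module.Basis.constr_basis]; exact rfl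
  have f2 : ψ (c 2) = b 0 := by rw [hψ, Module.Basis.constr_basis]; exact rfl
  have f3 : ψ (c 3) = -b 1 := by rw [hψ, Module.Basis.constr_basis]; exact rfl
  have f4 : ψ (c 4) = -α⁻¹ • b 4 := by rw [hψ, Module.Basis.constr_basis]; exact rfl
  have f5 : ψ (c 5) = b 5 := by rw [hψ, Module.Basis.constr_basis]; exact rfl
  clear_value φ ψ
  clear hφ hψ
  have key : ∀ i j : Fin 6, φ ⁅b i, b j⁆ = ⁅φ (b i), φ (b j)⁆ := by
    intro i j
    fin_cases i <;> fin_cases j <;>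
      simp [e0, e1, e2, e3, e4, e5, hb1, hb2, hb3, hb4, hb5,
        hb1', hb2', hb3', hb4', hb5', hc1, hc2, hc3, hc4, hc5,
        hc1', hc2', hc3', hc4', hc5', hb0, hc0, smul_smul,
        mul_inv_cancel₀ hα, inv_mul_cancel₀ hα, neg_mul, mul_neg,
        smul_lie, lie_smul, neg_lie, lie_neg]
  constructor
  · -- homomorphism property
    let L1 : g →ₗ[ℝ] g →ₗ[ℝ] h := LinearMap.mk₂ ℝ (fun x y => φ ⁅x, y⁆)
      (fun x y z => by simp only [add_lie, map_add])
      (fun t x y => by simp only [smul_lie, map_smul])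
      (fun x y z => by simp only [lie_add, map_add])
      (fun t x y => by simp only [lie_smul, map_smul])
    let L2 : g →ₗ[ℝ] g →ₗ[ℝ] h := LinearMap.mk₂ ℝ (fun x y => ⁅φ x, φ y⁆)
      (fun x y z => by simp only [map_add, add_lie])
      (fun t x y => by simp only [map_smul, smul_lie])
      (fun x y z => by simp only [map_add, lie_add])
      (fun t x y => by simp only [map_smul, lie_smul])
    have hL : L1 = L2 := b.ext fun i => b.ext fun j => key i j
    intro x y
    exact DFunLike.congr_fun (DFunLike.congr_fun hL x) y
  · -- bijectivity
    have hright : ψ.comp φ = LinearMap.id := by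
      apply b.ext
      intro i
      fin_cases i <;>
        simp [LinearMap.comp_apply, e0, e1, e2, e3, e4, e5, f0, f1, f2, f3, f4, f5,
          smul_smul, mul_inv_cancel₀ hα, inv_mul_cancel₀ hα, neg_mul, mul_neg]
    have hleft : φ.comp ψ = LinearMap.id := by
      apply c.ext
      intro i
      fin_cases i <;>
        simp [LinearMap.comp_apply, e0, e1, e2, e3, e4, e5, f0, f1, f2, f3, f4, f5,
          smul_smul, mul_inv_cancel₀ hα, inv_mul_cancel₀ hα, neg_mul, mul_neg]
    have hr : Function.LeftInverse ψ φ := fun x => by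
      have := LinearMap.congr_fun hright x
      simpa using this
    have hl : Function.RightInverse ψ φ := fun x => by
      have := LinearMap.congr_fun hleft x
      simpa using this
    exact ⟨hr.injective, hl.surjective⟩
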